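/- Let d be a negative-type distance on a finite set X, let A, B ⊆ X with |A| = |B| = k ≥ 1, and let π : A → B be a bijection that is the identity on A ∩ B. Then ∑_{a∈A} (d(A − a + π(a)) − d(A)) ≥ (1 − 2/k)·d(B) − (1 + 2/k)·d(A), where A − a + b denotes (A \ {a}) ∪ {b}. -/

import Mathlib

open Finset

/-- `d` is a distance of negative type on the finite type `X`. -/
def NegType {X : Type*} [Fintype X] (d : X → X → ℝ) : Prop :=
  ∀ x : X → ℝ, ∑ i, x i = 0 → ∑ i, ∑ j, x i * d i j * x j ≤ 0

/-- The dispersion of a finite set: sum of distances over unordered pairs. -/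
noncomputable def disp {X : Type*} (d : X → X → ℝ) (A : Finset X) : ℝ :=
  (∑ a ∈ A, ∑ b ∈ A, d a b) / 2

/-- Sum of all distances between two sets. -/
def dsum {X : Type*} (d : X → X → ℝ) (A B : Finset X) : ℝ :=
  ∑ a ∈ A, ∑ b ∈ B, d a b

section Aux
variable {X : Type*} [Fintype X] [DecidableEq X]
set_option linter.unusedSectionVars false

def indf (S : Finset X) : X → ℝ := fun i => if i ∈ S then 1 else 0

def qf (d : X → X → ℝ) (u v : X → ℝ) : ℝ := ∑ i, ∑ j, u i * d i j * v j

lemma qf_indf (d : X → X → ℝ) (S T : Finset X) : qf d (indf S) (indf T) = dsum d S T := by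
  simp only [qf, indf, dsum, ite_mul, mul_ite, one_mul, zero_mul, mul_one, mul_zero]
  simp [Finset.sum_ite_mem]

lemma qf_add_left (d : X → X → ℝ) (u v w : X → ℝ) :
    qf d (fun i => u i + v i) w = qf d u w + qf d v w := by
  simp [qf, add_mul, Finset.sum_add_distrib]

lemma qf_sub_left (d : X → X → ℝ) (u v w : X → ℝ) :
    qf d (fun i => u i - v i) w = qf d u w - qf d v w := by
  simp [qf, sub_mul, Finset.sum_sub_distrib]

lemma qf_add_right (d : X → X → ℝ) (u v w : X → ℝ) :
    qf d u (fun i => v i + w i) = qf d u v + qf d u w := by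
  simp [qf, mul_add, Finset.sum_add_distrib]

lemma qf_sub_right (d : X → X → ℝ) (u v w : X → ℝ) :
    qf d u (fun i => v i - w i) = qf d u v - qf d u w := by
  simp [qf, mul_sub, Finset.sum_sub_distrib]

lemma qf_smul_left (d : X → X → ℝ) (c : ℝ) (u w : X → ℝ) :
    qf d (fun i => c * u i) w = c * qf d u w := by
  simp [qf, Finset.mul_sum]; congr 1; ext i; congr 1; ext j; ring

lemma qf_smul_right (d : X → X → ℝ) (c : ℝ) (u w : X → ℝ) :
    qf d u (fun i => c * w i) = c * qf d u w := by
  simp [qf, Finset.mul_sum]; congr 1; ext i; congr 1; ext j; ring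

lemma dsum_symm (d : X → X → ℝ) (hsymm : ∀ a b, d a b = d b a) (S T : Finset X) :
    dsum d S T = dsum d T S := by
  rw [dsum, Finset.sum_comm, dsum]
  exact Finset.sum_congr rfl fun i _ => Finset.sum_congr rfl fun j _ => hsymm _ _

lemma fact1 (d : X → X → ℝ) (hsymm : ∀ a b, d a b = d b a) (hneg : NegType d)
    (A B : Finset X) (hcard : A.card = B.card) :
    dsum d A A + dsum d B B ≤ 2 * dsum d A B := by
  have hx : ∑ i, (indf A i - indf B i) = 0 := by
    simp [indf, Finset.sum_sub_distrib, hcard]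
  have h : qf d (fun i => indf A i - indf B i) (fun i => indf A i - indf B i) ≤ 0 :=
    hneg _ hx
  simp only [qf_sub_left, qf_sub_right, qf_indf] at h
  rw [dsum_symm d hsymm B A] at h
  linarith

lemma fact2 (d : X → X → ℝ) (hsymm : ∀ a b, d a b = d b a) (hdiag : ∀ a, d a a = 0)
    (hneg : NegType d) (k : ℕ) (A B : Finset X) (hA : A.card = k) (hB : B.card = k)
    (a b : X) :
    2*(k:ℝ)^2 * d a b ≤ 2*(k:ℝ)*((∑ y ∈ A, d a y) + (∑ y ∈ B, d a y)
        + (∑ y ∈ A, d b y) + (∑ y ∈ B, d b y))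
      - (dsum d A A + 2 * dsum d A B + dsum d B B) := by
  have hx : ∑ i, ((k:ℝ) * (indf {a} i + indf {b} i) - (indf A i + indf B i)) = 0 := by
    simp [indf, Finset.sum_sub_distrib, Finset.sum_add_distrib, ← Finset.mul_sum, hA, hB]
    ring
  have h : qf d (fun i => (k:ℝ) * (indf {a} i + indf {b} i) - (indf A i + indf B i))
      (fun i => (k:ℝ) * (indf {a} i + indf {b} i) - (indf A i + indf B i)) ≤ 0 :=
    hneg _ hx
  simp only [qf_sub_left, qf_sub_right, qf_add_left, qf_add_right, qf_smul_left,
    qf_smul_right, qf_indf] at h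
  have hsing : ∀ (c : X) (T : Finset X), dsum d {c} T = ∑ y ∈ T, d c y := by
    simp [dsum]
  have hsing' : ∀ (c : X) (T : Finset X), dsum d T {c} = ∑ y ∈ T, d c y := by
    intro c T
    rw [dsum_symm d hsymm]
    exact hsing c T
  simp only [hsing, hsing', Finset.sum_singleton, hdiag] at h
  rw [hsymm b a] at h
  rw [dsum_symm d hsymm B A] at h
  nlinarith [h]

lemma double_sum_insert (d : X → X → ℝ) (hsymm : ∀ a b, d a b = d b a)
    (hdiag : ∀ a, d a a = 0) (b : X) (T : Finset X) (hb : b ∉ T) :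
    ∑ x ∈ insert b T, ∑ y ∈ insert b T, d x y
      = (∑ x ∈ T, ∑ y ∈ T, d x y) + 2 * ∑ x ∈ T, d b x := by
  rw [Finset.sum_insert hb, Finset.sum_insert hb, hdiag]
  have h1 : ∀ x ∈ T, ∑ y ∈ insert b T, d x y = d x b + ∑ y ∈ T, d x y :=
    fun x _ => Finset.sum_insert hb
  rw [Finset.sum_congr rfl h1, Finset.sum_add_distrib]
  have h2 : ∑ x ∈ T, d x b = ∑ x ∈ T, d b x :=
    Finset.sum_congr rfl fun x _ => hsymm x b
  rw [h2]; ring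

lemma exchange (d : X → X → ℝ) (hsymm : ∀ a b, d a b = d b a) (hdiag : ∀ a, d a a = 0)
    (A : Finset X) (a b : X) (ha : a ∈ A) (hb : b ∉ A.erase a) :
    disp d (insert b (A.erase a)) - disp d A
      = (∑ x ∈ A.erase a, d b x) - ∑ x ∈ A.erase a, d a x := by
  have e1 := double_sum_insert d hsymm hdiag b (A.erase a) hb
  have e2 := double_sum_insert d hsymm hdiag a (A.erase a) (Finset.notMem_erase a A)
  rw [Finset.insert_erase ha] at e2
  rw [disp, disp, e1, e2]
  ring

end Aux

theorem stmt_3 {X : Type*} [Fintype X] [DecidableEq X] (d : X → X → ℝ)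
    (hsymm : ∀ a b, d a b = d b a) (hnonneg : ∀ a b, 0 ≤ d a b)
    (hdiag : ∀ a, d a a = 0) (hneg : NegType d)
    (k : ℕ) (hk : 1 ≤ k) (A B : Finset X) (hAcard : A.card = k) (hBcard : B.card = k)
    (π : X → X) (hbij : Set.BijOn π ↑A ↑B)
    (hfix : ∀ a ∈ A, a ∈ B → π a = a) :
    ∑ a ∈ A, (disp d (insert (π a) (A.erase a)) - disp d A)
      ≥ (1 - 2 / k) * disp d B - (1 + 2 / k) * disp d A := by
  have hkn : 0 < k := hk
  have hk0 : (0:ℝ) < (k:ℝ) := by exact_mod_cast hkn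
  have hk1 : (1:ℝ) ≤ (k:ℝ) := by exact_mod_cast hk
  have hπmem : ∀ a ∈ A, π a ∈ B := fun a ha => hbij.mapsTo ha
  have hnotin : ∀ a ∈ A, π a ∉ A.erase a := by
    intro a ha h
    have h1 : π a ∈ A := Finset.mem_of_mem_erase h
    have h2 : π a ≠ a := Finset.ne_of_mem_erase h
    have h3 : π (π a) = π a := hfix (π a) h1 (hπmem a ha)
    exact h2 (hbij.injOn h1 ha h3)
  have hstep : ∀ a ∈ A, disp d (insert (π a) (A.erase a)) - disp d A
      = (∑ x ∈ A.erase a, d (π a) x) - ∑ x ∈ A.erase a, d a x :=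
    fun a ha => exchange d hsymm hdiag A a (π a) ha (hnotin a ha)
  rw [Finset.sum_congr rfl hstep]
  -- reindexing lemmas along the bijection π
  have e3 : ∑ a ∈ A, ∑ y ∈ A, d (π a) y = dsum d B A :=
    Finset.sum_nbij π hπmem hbij.injOn hbij.surjOn (fun _ _ => rfl)
  have e4 : ∑ a ∈ A, ∑ y ∈ B, d (π a) y = dsum d B B :=
    Finset.sum_nbij π hπmem hbij.injOn hbij.surjOn (fun _ _ => rfl)
  have eP : ∑ a ∈ A, ∑ y ∈ A, d a y = dsum d A A := rfl
  have eR : ∑ a ∈ A, ∑ y ∈ B, d a y = dsum d A B := rfl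
  have eS : ∑ a ∈ A, d (π a) a = ∑ a ∈ A, d a (π a) :=
    Finset.sum_congr rfl fun a _ => hsymm _ _
  have hR' : dsum d B A = dsum d A B := dsum_symm d hsymm B A
  -- the LHS of the goal
  have hL : ∑ a ∈ A, ((∑ x ∈ A.erase a, d (π a) x) - ∑ x ∈ A.erase a, d a x)
      = dsum d A B - (∑ a ∈ A, d a (π a)) - dsum d A A := by
    calc ∑ a ∈ A, ((∑ x ∈ A.erase a, d (π a) x) - ∑ x ∈ A.erase a, d a x)
        = ∑ a ∈ A, (((∑ x ∈ A, d (π a) x) - d (π a) a) - ∑ x ∈ A, d a x) := by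
          refine Finset.sum_congr rfl fun a ha => ?_
          rw [Finset.sum_erase_eq_sub ha, Finset.sum_erase_eq_sub ha, hdiag, sub_zero]
      _ = ((∑ a ∈ A, ∑ x ∈ A, d (π a) x) - ∑ a ∈ A, d (π a) a)
            - ∑ a ∈ A, ∑ x ∈ A, d a x := by
          rw [Finset.sum_sub_distrib, Finset.sum_sub_distrib]
      _ = dsum d A B - (∑ a ∈ A, d a (π a)) - dsum d A A := by
          rw [e3, hR', eS, eP]
  rw [hL]
  -- the two key inequalities
  have hf1 : dsum d A A + dsum d B B ≤ 2 * dsum d A B :=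
    fact1 d hsymm hneg A B (by rw [hAcard, hBcard])
  have hgsum : ∑ a ∈ A, (2*(k:ℝ)*((∑ y ∈ A, d a y) + (∑ y ∈ B, d a y)
        + (∑ y ∈ A, d (π a) y) + (∑ y ∈ B, d (π a) y))
      - (dsum d A A + 2 * dsum d A B + dsum d B B))
      = 2*(k:ℝ)*(dsum d A A + dsum d A B + dsum d B A + dsum d B B)
        - (k:ℝ)*(dsum d A A + 2 * dsum d A B + dsum d B B) := by
    rw [Finset.sum_sub_distrib, ← Finset.mul_sum, Finset.sum_add_distrib,
      Finset.sum_add_distrib, Finset.sum_add_distrib, eP, eR, e3, e4,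
      Finset.sum_const, hAcard, nsmul_eq_mul]
  have h2' : 2*(k:ℝ)^2 * (∑ a ∈ A, d a (π a))
      ≤ 2*(k:ℝ)*(dsum d A A + dsum d A B + dsum d B A + dsum d B B)
        - (k:ℝ)*(dsum d A A + 2 * dsum d A B + dsum d B B) := by
    rw [← hgsum, show 2*(k:ℝ)^2 * (∑ a ∈ A, d a (π a))
        = ∑ a ∈ A, 2*(k:ℝ)^2 * d a (π a) from Finset.mul_sum _ _ _]
    exact Finset.sum_le_sum fun a ha =>
      fact2 d hsymm hdiag hneg k A B hAcard hBcard a (π a)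
  rw [hR'] at h2'
  have hf2 : 2*(k:ℝ)*(∑ a ∈ A, d a (π a))
      ≤ dsum d A A + 2 * dsum d A B + dsum d B B := by
    refine le_of_mul_le_mul_left ?_ hk0
    calc (k:ℝ) * (2*(k:ℝ)*(∑ a ∈ A, d a (π a)))
        = 2*(k:ℝ)^2 * (∑ a ∈ A, d a (π a)) := by ring
      _ ≤ 2*(k:ℝ)*(dsum d A A + dsum d A B + dsum d A B + dsum d B B)
          - (k:ℝ)*(dsum d A A + 2 * dsum d A B + dsum d B B) := h2'
      _ = (k:ℝ) * (dsum d A A + 2 * dsum d A B + dsum d B B) := by ring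
  -- final arithmetic
  have hdispA : disp d A = dsum d A A / 2 := rfl
  have hdispB : disp d B = dsum d B B / 2 := rfl
  rw [hdispA, hdispB, ge_iff_le,
    show (1 - 2/(k:ℝ)) * (dsum d B B / 2) - (1 + 2/(k:ℝ)) * (dsum d A A / 2)
      = (((k:ℝ)-2) * dsum d B B - ((k:ℝ)+2) * dsum d A A) / (2*(k:ℝ)) from by
        have hkne : (k:ℝ) ≠ 0 := ne_of_gt hk0
        field_simp,
    div_le_iff₀ (by positivity)]
  have hprod : 0 ≤ ((k:ℝ)-1) * (2 * dsum d A B - dsum d A A - dsum d B B) :=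
    mul_nonneg (by linarith) (by linarith)
  nlinarith [hf2, hprod]
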